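/- The function g(x) = ∑_{n=1}^∞ (n - x)/(n + x)^3 is positive for all x > -1. -/

import Mathlib

open Filter Finset

private lemma elbert_aux_sum (φ : ℝ → ℝ) (m p : ℕ) (c : ℕ → ℝ)
    (hc : c = fun n => if n < m then φ ((n : ℝ) + 1 / 2) - φ ((n : ℝ) + 3 / 2)
      else φ ((n : ℝ) + 1) - φ ((n : ℝ) + 2)) :
    ∑ n ∈ range (m + p), c n
      = (φ (1/2) - φ ((m:ℝ) + 1/2)) + (φ ((m:ℝ) + 1) - φ ((m:ℝ) + (p:ℝ) + 1)) := by
  rw [Finset.sum_range_add]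
  congr 1
  · have h1 : ∀ n ∈ range m, c n = (fun i : ℕ => φ ((i:ℝ) + 1/2)) n - (fun i : ℕ => φ ((i:ℝ) + 1/2)) (n+1) := by
      intro n hn
      have harg : ((n+1:ℕ):ℝ) + 1/2 = (n:ℝ) + 3/2 := by push_cast; ring
      simp only [hc, if_pos (mem_range.1 hn), harg]
    rw [Finset.sum_congr rfl h1, Finset.sum_range_sub']
    norm_num
  · have h2 : ∀ i ∈ range p, c (m + i)
        = (fun j : ℕ => φ ((m:ℝ) + (j:ℝ) + 1)) i - (fun j : ℕ => φ ((m:ℝ) + (j:ℝ) + 1)) (i+1) := by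
      intro i hi
      have hni : ¬ (m + i < m) := by omega
      have harg1 : ((m+i:ℕ):ℝ) + 1 = (m:ℝ) + (i:ℝ) + 1 := by push_cast; ring
      have harg2 : ((m+i:ℕ):ℝ) + 2 = (m:ℝ) + ((i+1:ℕ):ℝ) + 1 := by push_cast; ring
      simp only [hc, if_neg hni, harg1, harg2]
    rw [Finset.sum_congr rfl h2, Finset.sum_range_sub']
    norm_num

private lemma elbert_aux_lim (φ : ℝ → ℝ) (x : ℝ) (hx : 1 ≤ x) (m : ℕ)
    (hφ : φ = fun a => a / (a + x) ^ 2) :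
    Tendsto (fun p : ℕ => φ ((m:ℝ) + (p:ℝ) + 1)) atTop (nhds 0) := by
  have hm0 : (0:ℝ) ≤ (m:ℝ) := m.cast_nonneg
  have hev1 : ∀ᶠ p : ℕ in atTop, 0 ≤ φ ((m:ℝ) + (p:ℝ) + 1) := by
    apply Filter.Eventually.of_forall
    intro p
    have hp0 : (0:ℝ) ≤ (p:ℝ) := p.cast_nonneg
    have h0 : (0:ℝ) < (m:ℝ) + (p:ℝ) + 1 + x := by linarith
    simp only [hφ]
    exact div_nonneg (by linarith) (by positivity)
  have hev2 : ∀ᶠ p : ℕ in atTop, φ ((m:ℝ) + (p:ℝ) + 1) ≤ 1 / (p:ℝ) := by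
    filter_upwards [Filter.eventually_ge_atTop 1] with p hp
    have hp1 : (1:ℝ) ≤ (p:ℝ) := by exact_mod_cast hp
    have h0 : (0:ℝ) < (m:ℝ) + (p:ℝ) + 1 + x := by linarith
    simp only [hφ]
    rw [div_le_div_iff₀ (by positivity) (by linarith : (0:ℝ) < (p:ℝ))]
    have e1 : (p:ℝ) ≤ (m:ℝ) + (p:ℝ) + 1 + x := by linarith
    have e2 : (m:ℝ) + (p:ℝ) + 1 ≤ (m:ℝ) + (p:ℝ) + 1 + x := by linarith
    nlinarith [mul_le_mul e2 e1 (by linarith) (by linarith)]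
  exact squeeze_zero' hev1 hev2 tendsto_one_div_atTop_nhds_zero_nat

set_option maxHeartbeats 1000000 in
theorem elbert_laforgia_series_pos (x : ℝ) (hx : -1 < x) :
    0 < ∑' n : ℕ, (((n : ℝ) + 1) - x) / (((n : ℝ) + 1) + x) ^ 3 := by
  set f : ℕ → ℝ := fun n => (((n : ℝ) + 1) - x) / (((n : ℝ) + 1) + x) ^ 3 with hfdef
  have hdx : ∀ n : ℕ, (0:ℝ) < ((n : ℝ) + 1) + x := by
    intro n
    have : (0:ℝ) ≤ (n:ℝ) := n.cast_nonneg
    linarith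
  -- summability
  have hsum : Summable f := by
    apply Summable.of_norm_bounded_eventually_nat (g := fun n => 16 / ((n:ℝ)+1)^2)
    · have h1 : Summable (fun n : ℕ => 1 / ((n:ℝ))^2) :=
        Real.summable_one_div_nat_pow.2 (by norm_num)
      have h2 := (summable_nat_add_iff 1).2 h1
      have h3 := h2.mul_left 16
      apply h3.congr
      intro n; push_cast; ring
    · filter_upwards [Filter.eventually_ge_atTop ⌈2*|x|+2⌉₊] with n hn
      have hn' : 2*|x|+2 ≤ (n:ℝ) := le_trans (Nat.le_ceil _) (by exact_mod_cast hn)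
      set k : ℝ := (n:ℝ)+1 with hk
      have hxk : |x| ≤ k/2 := by simp [hk]; linarith
      have hk0 : (0:ℝ) < k := by have := abs_nonneg x; simp [hk]; linarith
      have hd : k/2 ≤ k + x := by have := neg_abs_le x; linarith
      have hnum : |k - x| ≤ 2*k := by
        have h := neg_abs_le x; have h' := le_abs_self x
        rw [abs_le]; constructor <;> linarith
      have hd0 : (0:ℝ) < k + x := by linarith
      simp only [hfdef]
      rw [norm_div, norm_pow]
      have habs : ‖k + x‖ = k + x := abs_of_pos hd0
      rw [habs]
      calc ‖k - x‖ / (k+x)^3 ≤ (2*k) / ((k/2)^3) := by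
              apply div_le_div₀ (by positivity) hnum (by positivity)
              exact pow_le_pow_left₀ (by positivity) hd 3
        _ = 16 / k^2 := by field_simp; ring
        _ = 16 / ((n:ℝ)+1)^2 := by rw [hk]
  rcases lt_or_ge x 1 with hx1 | hx1
  · -- easy case : every term nonneg, first term positive
    apply Summable.tsum_pos hsum
    · intro n
      have : (0:ℝ) ≤ (n:ℝ) := n.cast_nonneg
      exact div_nonneg (by linarith) (pow_nonneg (hdx n).le 3)
    · show 0 < f 0
      simp only [hfdef]
      norm_num
      apply div_pos (by linarith)
      have : (0:ℝ) < 1 + x := by linarith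
      positivity
  · -- main case : x ≥ 1
    set φ : ℝ → ℝ := fun a => a / (a + x) ^ 2 with hφ
    set m : ℕ := ⌈2 * x⌉₊ with hm
    have hm1 : 2 * x ≤ (m : ℝ) := Nat.le_ceil _
    have hm2 : (m : ℝ) < 2 * x + 1 := Nat.ceil_lt_add_one (by linarith)
    set c : ℕ → ℝ := fun n =>
      if n < m then φ ((n : ℝ) + 1 / 2) - φ ((n : ℝ) + 3 / 2)
      else φ ((n : ℝ) + 1) - φ ((n : ℝ) + 2) with hc
    -- termwise inequality
    have hcf : ∀ n : ℕ, c n ≤ f n := by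
      intro n
      have hk1 : (1 : ℝ) ≤ (n : ℝ) + 1 := by have : (0:ℝ) ≤ (n:ℝ) := n.cast_nonneg; linarith
      by_cases hnm : n < m
      · have hk2 : (n : ℝ) + 1 ≤ 2 * x + 1 := by
          have : (n : ℝ) + 1 ≤ (m : ℝ) := by exact_mod_cast Nat.succ_le_of_lt hnm
          linarith
        simp only [hc, hfdef, hφ, if_pos hnm]
        set k : ℝ := (n : ℝ) + 1 with hkdef
        have h1 : (0:ℝ) < k + x := by linarith
        have h2 : (0:ℝ) < k - 1/2 + x := by simp only [hkdef]; linarith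
        have h3 : (0:ℝ) < k + 1/2 + x := by simp only [hkdef]; linarith
        have hPA : 0 ≤ -4*k^3 + 4*k^2*x + 20*k*x^2 + 12*x^3 + k - x := by
          nlinarith [mul_nonneg (mul_nonneg (sub_nonneg.2 hk2) (sub_nonneg.2 hk1)) (by linarith : (0:ℝ) ≤ x),
            mul_nonneg (mul_nonneg (sub_nonneg.2 hk2) (sub_nonneg.2 hk2)) (by linarith : (0:ℝ) ≤ x),
            mul_nonneg (sub_nonneg.2 hk2) (sub_nonneg.2 hx1), sq_nonneg (k - 2*x), sq_nonneg (k-1), sq_nonneg x]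
        have hrw1 : (n : ℝ) + 1/2 = k - 1/2 := by simp only [hkdef]; ring
        have hrw2 : (n : ℝ) + 3/2 = k + 1/2 := by simp only [hkdef]; ring
        rw [hrw1, hrw2]
        have hrw3 : k - 1/2 + x = k - 1/2 + x := rfl
        rw [div_sub_div _ _ (by positivity) (by positivity : ((k+1/2) + x)^2 ≠ 0),
          div_le_div_iff₀ (by positivity) (by positivity)]
        nlinarith [hPA, pow_pos h1 3, pow_pos h2 2, pow_pos h3 2,
          mul_pos (mul_pos (pow_pos h1 3) (pow_pos h2 2)) (pow_pos h3 2)]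
      · have hk2 : 2 * x + 1 ≤ (n : ℝ) + 1 := by
          have : (m : ℝ) ≤ (n : ℝ) := by exact_mod_cast Nat.le_of_not_lt hnm
          linarith
        simp only [hc, hfdef, hφ, if_neg hnm]
        set k : ℝ := (n : ℝ) + 1 with hkdef
        have h1 : (0:ℝ) < k + x := by linarith
        have h3 : (0:ℝ) < k + 1 + x := by linarith
        have hPB : 0 ≤ k^2 - k*x + k - 2*x^2 - x := by
          nlinarith [mul_nonneg (sub_nonneg.2 hk2) (by linarith : (0:ℝ) ≤ k + x + 2)]
        have hrw2 : (n : ℝ) + 2 = k + 1 := by simp only [hkdef]; ring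
        rw [hrw2]
        rw [div_sub_div _ _ (by positivity) (by positivity : ((k+1) + x)^2 ≠ 0),
          div_le_div_iff₀ (by positivity) (by positivity)]
        nlinarith [hPB, pow_pos h1 3, pow_pos h3 2, mul_pos (pow_pos h1 3) (pow_pos h3 2)]
    -- partial sums of f bounded below
    have hps : ∀ p : ℕ,
        (φ (1/2) - φ ((m:ℝ) + 1/2)) + (φ ((m:ℝ) + 1) - φ ((m:ℝ) + (p:ℝ) + 1))
          ≤ ∑ n ∈ range (m + p), f n := by
      intro p
      rw [← elbert_aux_sum φ m p c hc]
      exact Finset.sum_le_sum fun n _ => hcf n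
    -- limits
    have hT : Tendsto (fun N : ℕ => ∑ n ∈ range N, f n) atTop (nhds (∑' n, f n)) :=
      hsum.hasSum.tendsto_sum_nat
    have hT2 : Tendsto (fun p : ℕ => ∑ n ∈ range (m + p), f n) atTop (nhds (∑' n, f n)) := by
      have hcomp : (fun p : ℕ => ∑ n ∈ range (m + p), f n)
          = (fun N : ℕ => ∑ n ∈ range N, f n) ∘ (fun p : ℕ => p + m) := by
        funext p
        simp [Nat.add_comm]
      rw [hcomp]
      exact hT.comp (tendsto_add_atTop_nat m)
    have hlim0 := elbert_aux_lim φ x hx1 m hφ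
    have hG : Tendsto
        (fun p : ℕ => (φ (1/2) - φ ((m:ℝ) + 1/2)) + (φ ((m:ℝ) + 1) - φ ((m:ℝ) + (p:ℝ) + 1)))
        atTop (nhds ((φ (1/2) - φ ((m:ℝ) + 1/2)) + (φ ((m:ℝ) + 1) - 0))) :=
      tendsto_const_nhds.add (tendsto_const_nhds.sub hlim0)
    have hle : (φ (1/2) - φ ((m:ℝ) + 1/2)) + (φ ((m:ℝ) + 1) - 0) ≤ ∑' n, f n :=
      le_of_tendsto_of_tendsto' hG hT2 hps
    -- final positivity
    have hfin : 0 < (φ (1/2) - φ ((m:ℝ) + 1/2)) + (φ ((m:ℝ) + 1) - 0) := by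
      simp only [hφ]
      set M : ℝ := (m : ℝ) with hM
      have hM0 : (0:ℝ) ≤ M := m.cast_nonneg
      have d1 : (0:ℝ) < 1/2 + x := by linarith
      have d2 : (0:ℝ) < M + 1/2 + x := by linarith
      have d3 : (0:ℝ) < M + 1 + x := by linarith
      have heq : (1/2)/((1/2:ℝ)+x)^2 - (M+1/2)/((M+1/2)+x)^2 + (M+1)/((M+1)+x)^2
          = (1/2*M^4 + 2*M^3*x + 3/2*M^3 + 5/2*M^2*x^2 + 4*M^2*x + 3/2*M^2 + 2*M*x^3
              + 15/4*M*x^2 + 5/2*M*x + 9/16*M + x^4 + 2*x^3 + 3/2*x^2 + 1/2*x + 1/16)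
            / ((1/2+x)^2 * ((M+1/2)+x)^2 * ((M+1)+x)^2) := by
        field_simp
        ring
      have : 0 < (1/2)/((1/2:ℝ)+x)^2 - (M+1/2)/((M+1/2)+x)^2 + (M+1)/((M+1)+x)^2 := by
        rw [heq]
        have hx0 : (0:ℝ) < x := by linarith
        positivity
      linarith [this]
    linarith [hle, hfin]
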